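/- Let f : 2^V → ℝ be submodular with f(∅) = 0 and let φ = (φ_1,…,φ_n) be a permutation of the finite set V. Define x ∈ ℝ^V by x_{φ_i} = f({φ_1,…,φ_i}) − f({φ_1,…,φ_{i−1}}). Then x lies in the base polyhedron B(f), i.e., x(X) ≤ f(X) for all X ⊆ V and x(V) = f(V). -/
import Mathlib


/-- The greedy vector of a permutation `φ` of `V` (listing `V` as `φ 0, φ 1, …`):
user `v` is assigned the marginal value of `f` when `v` joins the set of users
preceding it in the order `φ`. -/
noncomputable def greedyVector {V : Type*} [Fintype V] [DecidableEq V]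
    (f : Finset V → ℝ) (φ : Fin (Fintype.card V) ≃ V) (v : V) : ℝ :=
  f (Finset.univ.filter fun u => φ.symm u ≤ φ.symm v) -
    f (Finset.univ.filter fun u => φ.symm u < φ.symm v)

/-- Correctness of the Edmonds greedy algorithm: the greedy vector of any
permutation lies in the base polyhedron `B(f)` of a submodular `f` with `f ∅ = 0`. -/
theorem greedy_mem_base_polyhedron {V : Type*} [Fintype V] [DecidableEq V]
    (f : Finset V → ℝ) (h0 : f ∅ = 0)
    (hsub : ∀ X Y : Finset V, f (X ∪ Y) + f (X ∩ Y) ≤ f X + f Y)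
    (φ : Fin (Fintype.card V) ≃ V) :
    (∀ X : Finset V, ∑ i ∈ X, greedyVector f φ i ≤ f X) ∧
      ∑ i, greedyVector f φ i = f Finset.univ := by
  constructor
  · intro X
    induction X using Finset.strongInduction with
    | _ X ih =>
      rcases X.eq_empty_or_nonempty with rfl | hne
      · simp [h0]
      · obtain ⟨v, hv, hmax⟩ := X.exists_max_image (fun u => φ.symm u) hne
        have herase : X.erase v ⊂ X := Finset.erase_ssubset hv
        have hIH := ih _ herase
        have hsum : ∑ i ∈ X, greedyVector f φ i
            = greedyVector f φ v + ∑ i ∈ X.erase v, greedyVector f φ i :=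
          (Finset.add_sum_erase X _ hv).symm
        set B : Finset V := Finset.univ.filter fun u => φ.symm u < φ.symm v with hB
        have hXB : X ∪ B = Finset.univ.filter fun u => φ.symm u ≤ φ.symm v := by
          ext u
          simp only [Finset.mem_union, hB, Finset.mem_filter, Finset.mem_univ, true_and]
          constructor
          · rintro (h | h)
            · exact hmax u h
            · exact le_of_lt h
          · intro h
            rcases lt_or_eq_of_le h with h' | h'
            · exact Or.inr h'
            · exact Or.inl (by rwa [φ.symm.injective h'])
        have hXcapB : X ∩ B = X.erase v := by
          ext u
          simp only [Finset.mem_inter, hB, Finset.mem_filter, Finset.mem_univ, true_and,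
            Finset.mem_erase]
          constructor
          · rintro ⟨hu, hlt⟩
            exact ⟨fun h => absurd hlt (by simp [h]), hu⟩
          · rintro ⟨hne', hu⟩
            exact ⟨hu, lt_of_le_of_ne (hmax u hu) (fun h => hne' (φ.symm.injective h))⟩
        have key := hsub X B
        rw [hXB, hXcapB] at key
        have : greedyVector f φ v + f (X.erase v) ≤ f X := by
          unfold greedyVector
          rw [← hB]
          linarith
        rw [hsum]
        linarith
  · set g : ℕ → ℝ := fun m => f (Finset.univ.filter fun u => ((φ.symm u : ℕ) < m)) with hg
    have h2 : ∀ k : Fin (Fintype.card V), greedyVector f φ (φ k) = g ((k : ℕ) + 1) - g (k : ℕ) := by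
      intro k
      unfold greedyVector
      rw [hg]
      congr 2 <;>
      · ext u
        simp only [Finset.mem_filter, Finset.mem_univ, true_and, Equiv.symm_apply_apply,
          Fin.le_def, Fin.lt_def, Nat.lt_succ_iff]
    have h1 : ∑ i, greedyVector f φ i = ∑ k : Fin (Fintype.card V), (g ((k : ℕ) + 1) - g (k : ℕ)) := by
      rw [← Equiv.sum_comp φ (greedyVector f φ)]
      exact Finset.sum_congr rfl fun k _ => h2 k
    rw [h1, Fin.sum_univ_eq_sum_range (fun m => g (m + 1) - g m) (Fintype.card V), Finset.sum_range_sub]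
    have hend : g (Fintype.card V) = f Finset.univ := by
      simp only [hg]
      congr 1
      ext u; simp [Fin.is_lt]
    have hz : g 0 = 0 := by
      simp only [hg]
      simp [h0]
    rw [hend, hz, sub_zero]
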